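/- Fix complex constants α0, α1 and t ∈ ℂ with t ≠ 0. The transition map r₂ : (x, y, z) ↦ (x₂, y₂, z₂) with x₂ = x + z/2, y₂ = −((y + (2/t)x − 1/t − (4(α1−1)α1 − 7)/(4t²))·z − (2(2α1−3)t·x + 2(α0+1)t + 4α1² − 8α1 + 3)/t³ + ((tz+4)/(4t))·z²)·z, z₂ = 1/z, defined on {(x,y,z) ∈ ℂ³ : z ≠ 0}, is differentiable and the determinant of its Jacobian matrix of partial derivatives with respect to (x, y, z) is identically equal to 1; in particular r₂ preserves the 3-form, dx₂ ∧ dy₂ ∧ dz₂ = dx ∧ dy ∧ dz. -/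

import Mathlib

/-- First component of the transition map `r₂`: `x₂ = x + z/2`. -/
noncomputable def r2f1 (α0 α1 t x y z : ℂ) : ℂ := x + z / 2

/-- Second component of the transition map `r₂`. -/
noncomputable def r2f2 (α0 α1 t x y z : ℂ) : ℂ :=
  -((y + (2 / t) * x - 1 / t - (4 * (α1 - 1) * α1 - 7) / (4 * t ^ 2)) * z
      - (2 * (2 * α1 - 3) * t * x + 2 * (α0 + 1) * t + 4 * α1 ^ 2 - 8 * α1 + 3) / t ^ 3
      + ((t * z + 4) / (4 * t)) * z ^ 2) * z

/-- Third component of the transition map `r₂`: `z₂ = 1/z`. -/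
noncomputable def r2f3 (α0 α1 t x y z : ℂ) : ℂ := 1 / z

lemma deriv_affine (a b x : ℂ) : deriv (fun s => a * s + b) x = a := by
  simpa using (((hasDerivAt_id x).const_mul a).add_const b).deriv

/-- The transition map `r₂` is differentiable on `{z ≠ 0}` and its Jacobian
determinant is identically `1`; in particular it preserves the 3-form
`dx ∧ dy ∧ dz`. -/
theorem r2_preserves_three_form (α0 α1 t : ℂ) (ht : t ≠ 0) :
    ∀ x y z : ℂ, z ≠ 0 →
      DifferentiableAt ℂ (fun P : ℂ × ℂ × ℂ =>
          (r2f1 α0 α1 t P.1 P.2.1 P.2.2,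
           r2f2 α0 α1 t P.1 P.2.1 P.2.2,
           r2f3 α0 α1 t P.1 P.2.1 P.2.2)) (x, y, z) ∧
      Matrix.det
        !![deriv (fun s => r2f1 α0 α1 t s y z) x,
           deriv (fun s => r2f1 α0 α1 t x s z) y,
           deriv (fun s => r2f1 α0 α1 t x y s) z;
           deriv (fun s => r2f2 α0 α1 t s y z) x,
           deriv (fun s => r2f2 α0 α1 t x s z) y,
           deriv (fun s => r2f2 α0 α1 t x y s) z;
           deriv (fun s => r2f3 α0 α1 t s y z) x,
           deriv (fun s => r2f3 α0 α1 t x s z) y,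
           deriv (fun s => r2f3 α0 α1 t x y s) z] = 1 := by
  intro x y z hz
  constructor
  · apply DifferentiableAt.prodMk
    · simp only [r2f1]; fun_prop
    apply DifferentiableAt.prodMk
    · simp only [r2f2]; fun_prop
    · simp only [r2f3, one_div]
      have hd : DifferentiableAt ℂ (fun P : ℂ × ℂ × ℂ => P.2.2) (x, y, z) := by fun_prop
      exact hd.inv hz
  · have h11 : deriv (fun s => r2f1 α0 α1 t s y z) x = 1 := by
      have : (fun s => r2f1 α0 α1 t s y z) = fun s => 1 * s + z / 2 := by
        funext s; simp [r2f1]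
      rw [this, deriv_affine]
    have h12 : deriv (fun s => r2f1 α0 α1 t x s z) y = 0 := by
      simp [r2f1]
    have h22 : deriv (fun s => r2f2 α0 α1 t x s z) y = -(z ^ 2) := by
      have : (fun s => r2f2 α0 α1 t x s z) = fun s =>
          (-(z ^ 2)) * s + r2f2 α0 α1 t x 0 z := by
        funext s; simp [r2f2]; ring
      rw [this, deriv_affine]
    have h31 : deriv (fun s => r2f3 α0 α1 t s y z) x = 0 := by simp [r2f3]
    have h32 : deriv (fun s => r2f3 α0 α1 t x s z) y = 0 := by simp [r2f3]
    have h33 : deriv (fun s => r2f3 α0 α1 t x y s) z = -(1 / z ^ 2) := by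
      have : (fun s => r2f3 α0 α1 t x y s) = fun s => s⁻¹ := by
        funext s; simp [r2f3]
      rw [this, deriv_inv]; ring
    simp only [Matrix.det_fin_three, Matrix.cons_val', Matrix.cons_val_zero,
      Matrix.cons_val_one, Matrix.head_cons, Matrix.empty_val',
      Matrix.cons_val_fin_one, Matrix.head_fin_const, Matrix.cons_val_two,
      Matrix.tail_cons, Matrix.of_apply, h11, h12, h22, h31, h32, h33]
    field_simp
    ring
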